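/- For independent St. Petersburg random variables X₁, X₂ and integers 1 ≤ k < ℓ, P{X₁ + X₂ > 2^ℓ + 2^k} / P{X₁ > 2^ℓ + 2^k} = 2 + 2·2^{-k} - 4·2^{-ℓ}. In particular, for every δ > 0, the limit of P{X₁+X₂ > x}/P{X₁ > x} as x → ∞ restricted to x with fractional part {log₂ x} ≥ δ equals 2. -/

import Mathlib

open MeasureTheory ProbabilityTheory Filter Topology
open scoped ENNReal

section
open Set

section Aux

variable {Ω : Type*} [MeasurableSpace Ω] (μ : Measure Ω) [IsProbabilityMeasure μ]
variable (Y : Ω → ℝ) (hm : Measurable Y)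
variable (hd : ∀ k : ℕ, 1 ≤ k → μ {ω | Y ω = 2 ^ k} = ((2 : ℝ≥0∞) ^ k)⁻¹)

lemma two_pow_inj {i j : ℕ} (h : (2:ℝ) ^ i = 2 ^ j) : i = j := by
  rcases lt_trichotomy i j with hij | hij | hij
  · exact absurd h (ne_of_lt (pow_lt_pow_right₀ one_lt_two hij))
  · exact hij
  · exact absurd h.symm (ne_of_lt (pow_lt_pow_right₀ one_lt_two hij))

lemma sp_tsum (n : ℕ) : ∑' k : ℕ, ((2 : ℝ≥0∞) ^ (n + 1 + k))⁻¹ = ((2 : ℝ≥0∞) ^ n)⁻¹ := by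
  have h2 : (1 : ℝ≥0∞) - 2⁻¹ = 2⁻¹ := by
    rw [ENNReal.sub_eq_of_eq_add (by norm_num)]
    rw [ENNReal.inv_two_add_inv_two]
  calc ∑' k : ℕ, ((2 : ℝ≥0∞) ^ (n + 1 + k))⁻¹
      = ∑' k : ℕ, ((2 : ℝ≥0∞) ^ n)⁻¹ * (2⁻¹ * 2⁻¹ ^ k) := by
        congr 1; ext k
        rw [pow_add, pow_add, ENNReal.mul_inv (by simp) (by simp),
          ENNReal.mul_inv (by simp) (by simp), pow_one, ENNReal.inv_pow, ENNReal.inv_pow,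
          mul_assoc]
    _ = ((2 : ℝ≥0∞) ^ n)⁻¹ * (2⁻¹ * (1 - 2⁻¹)⁻¹) := by
        rw [ENNReal.tsum_mul_left, ENNReal.tsum_mul_left, ENNReal.tsum_geometric]
    _ = ((2 : ℝ≥0∞) ^ n)⁻¹ := by
        rw [h2, ENNReal.mul_inv_cancel (by norm_num) (by norm_num), mul_one]

include hm hd in
lemma sp_null : μ {ω | ¬ ∃ k : ℕ, 1 ≤ k ∧ Y ω = 2 ^ k} = 0 := by
  have hU : {ω | ∃ k : ℕ, 1 ≤ k ∧ Y ω = 2 ^ k} = ⋃ k : ℕ, {ω | Y ω = 2 ^ (k + 1)} := by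
    ext ω
    simp only [Set.mem_setOf_eq, Set.mem_iUnion]
    constructor
    · rintro ⟨k, hk, h⟩
      exact ⟨k - 1, by rw [Nat.sub_add_cancel hk]; exact h⟩
    · rintro ⟨k, h⟩
      exact ⟨k + 1, Nat.le_add_left 1 k, h⟩
  have hmeas : ∀ k : ℕ, MeasurableSet {ω | Y ω = 2 ^ (k + 1)} := fun k =>
    hm (measurableSet_singleton _)
  have hdisj : Pairwise (Function.onFun Disjoint fun k : ℕ => {ω | Y ω = 2 ^ (k + 1)}) := by
    intro i j hij
    refine Set.disjoint_left.2 fun ω hi hj => hij ?_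
    have : (2 : ℝ) ^ (i + 1) = 2 ^ (j + 1) := by
      rw [← hi, ← hj]
    have := two_pow_inj this
    omega
  have hmU : μ (⋃ k : ℕ, {ω | Y ω = 2 ^ (k + 1)}) = 1 := by
    rw [measure_iUnion hdisj hmeas]
    have : ∀ k : ℕ, μ {ω | Y ω = 2 ^ (k + 1)} = ((2 : ℝ≥0∞) ^ (0 + 1 + k))⁻¹ := by
      intro k
      rw [hd (k + 1) (Nat.le_add_left 1 k)]
      congr 1
      ring
    simp_rw [this]
    rw [sp_tsum 0]
    simp
  have : {ω | ¬ ∃ k : ℕ, 1 ≤ k ∧ Y ω = 2 ^ k} = (⋃ k : ℕ, {ω | Y ω = 2 ^ (k + 1)})ᶜ := by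
    rw [← hU]; rfl
  rw [this, measure_compl (hU ▸ MeasurableSet.iUnion hmeas) (measure_ne_top μ _), hmU,
    measure_univ, tsub_self]

include hm hd in
lemma sp_tail (n : ℕ) (t : ℝ) (h1 : (2:ℝ) ^ n ≤ t) (h2 : t < 2 ^ (n + 1)) :
    μ {ω | t < Y ω} = ((2 : ℝ≥0∞) ^ n)⁻¹ := by
  set U := ⋃ k : ℕ, {ω | Y ω = 2 ^ (n + 1 + k)} with hUdef
  have hmeas : ∀ k : ℕ, MeasurableSet {ω | Y ω = 2 ^ (n + 1 + k)} := fun k =>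
    hm (measurableSet_singleton _)
  have hdisj : Pairwise (Function.onFun Disjoint fun k : ℕ => {ω | Y ω = 2 ^ (n + 1 + k)}) := by
    intro i j hij
    refine Set.disjoint_left.2 fun ω hi hj => hij ?_
    have : (2 : ℝ) ^ (n + 1 + i) = 2 ^ (n + 1 + j) := by rw [← hi, ← hj]
    have := two_pow_inj this
    omega
  have hmU : μ U = ((2 : ℝ≥0∞) ^ n)⁻¹ := by
    rw [hUdef, measure_iUnion hdisj hmeas]
    have : ∀ k : ℕ, μ {ω | Y ω = 2 ^ (n + 1 + k)} = ((2 : ℝ≥0∞) ^ (n + 1 + k))⁻¹ := fun k =>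
      hd (n + 1 + k) (by omega)
    simp_rw [this]
    exact sp_tsum n
  have key : {ω | t < Y ω} ∩ {ω | ∃ k : ℕ, 1 ≤ k ∧ Y ω = 2 ^ k} = U := by
    ext ω
    simp only [Set.mem_inter_iff, Set.mem_setOf_eq, hUdef, Set.mem_iUnion]
    constructor
    · rintro ⟨ht, k, hk, he⟩
      have hkn : n + 1 ≤ k := by
        by_contra hc
        push_neg at hc
        have : (2:ℝ) ^ k ≤ 2 ^ n := pow_le_pow_right₀ (by norm_num) (by omega)
        rw [he] at ht
        linarith
      exact ⟨k - (n + 1), by rw [show n + 1 + (k - (n+1)) = k by omega]; exact he⟩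
    · rintro ⟨k, he⟩
      refine ⟨?_, n + 1 + k, by omega, he⟩
      have : (2:ℝ) ^ (n + 1) ≤ 2 ^ (n + 1 + k) := pow_le_pow_right₀ (by norm_num) (by omega)
      rw [he]; linarith
  have := measure_inter_conull (s := {ω | t < Y ω})
    (t := {ω | ∃ k : ℕ, 1 ≤ k ∧ Y ω = 2 ^ k}) (μ := μ) (sp_null μ Y hm hd)
  rw [key] at this
  rw [← this, hmU]


include hm hd in
lemma sp_ge (n : ℕ) (hn : 1 ≤ n) :
    μ {ω | (2:ℝ) ^ n ≤ Y ω} = 2 * ((2 : ℝ≥0∞) ^ n)⁻¹ := by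
  have hsplit : {ω | (2:ℝ) ^ n ≤ Y ω} = {ω | Y ω = 2 ^ n} ∪ {ω | (2:ℝ) ^ n < Y ω} := by
    ext ω
    simp only [Set.mem_setOf_eq, Set.mem_union]
    constructor
    · intro h
      rcases h.lt_or_eq with h' | h'
      · exact Or.inr h'
      · exact Or.inl h'.symm
    · rintro (h | h)
      · exact h.ge
      · exact h.le
  have hdisj : Disjoint {ω | Y ω = 2 ^ n} {ω | (2:ℝ) ^ n < Y ω} :=
    Set.disjoint_left.2 fun ω h1 h2 => by simp only [Set.mem_setOf_eq] at h1 h2; linarith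
  rw [hsplit, measure_union hdisj (hm measurableSet_Ioi), hd n hn,
    sp_tail μ Y hm hd n (2 ^ n) le_rfl (pow_lt_pow_right₀ one_lt_two (by omega)), two_mul]

include hm hd in
lemma sp_ioo_add (k l : ℕ) (hk : 1 ≤ k) (hkl : k < l) :
    μ {ω | (2:ℝ) ^ k < Y ω ∧ Y ω < 2 ^ l} + 2 * ((2 : ℝ≥0∞) ^ l)⁻¹ = ((2 : ℝ≥0∞) ^ k)⁻¹ := by
  have hkl' : (2:ℝ) ^ k < 2 ^ l := pow_lt_pow_right₀ one_lt_two hkl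
  have hsplit : {ω | (2:ℝ) ^ k < Y ω} =
      {ω | (2:ℝ) ^ k < Y ω ∧ Y ω < 2 ^ l} ∪ {ω | (2:ℝ) ^ l ≤ Y ω} := by
    ext ω
    simp only [Set.mem_setOf_eq, Set.mem_union]
    constructor
    · intro h
      rcases lt_or_ge (Y ω) (2 ^ l) with h' | h'
      · exact Or.inl ⟨h, h'⟩
      · exact Or.inr h'
    · rintro (⟨h, _⟩ | h)
      · exact h
      · linarith
  have hdisj : Disjoint {ω | (2:ℝ) ^ k < Y ω ∧ Y ω < 2 ^ l} {ω | (2:ℝ) ^ l ≤ Y ω} :=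
    Set.disjoint_left.2 fun ω h1 h2 => by
      simp only [Set.mem_setOf_eq] at h1 h2; linarith [h1.2]
  have hms : MeasurableSet {ω | (2:ℝ) ^ k < Y ω ∧ Y ω < 2 ^ l} := by
    have : {ω | (2:ℝ) ^ k < Y ω ∧ Y ω < 2 ^ l} = Y ⁻¹' (Set.Ioo (2 ^ k) (2 ^ l)) := rfl
    rw [this]; exact hm measurableSet_Ioo
  have := sp_tail μ Y hm hd k (2 ^ k) le_rfl (pow_lt_pow_right₀ one_lt_two (by omega))
  rw [← this, hsplit, measure_union hdisj (hm measurableSet_Ici),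
    sp_ge μ Y hm hd l (by omega)]

lemma log_floor (x : ℝ) (hx : 2 ≤ x) :
    ∃ n : ℕ, 1 ≤ n ∧ ((n : ℝ) = ⌊Real.logb 2 x⌋) ∧ (2:ℝ) ^ n ≤ x ∧ x < 2 ^ (n + 1) := by
  have hx0 : (0:ℝ) < x := by linarith
  have h1 : 1 ≤ Real.logb 2 x := by
    rw [Real.le_logb_iff_rpow_le one_lt_two hx0]
    simpa using hx
  have hf1 : 1 ≤ ⌊Real.logb 2 x⌋ := Int.le_floor.mpr (by exact_mod_cast h1)
  have hcast : (((⌊Real.logb 2 x⌋).toNat : ℕ) : ℝ) = ((⌊Real.logb 2 x⌋ : ℤ) : ℝ) := by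
    exact_mod_cast Int.toNat_of_nonneg (by omega)
  refine ⟨(⌊Real.logb 2 x⌋).toNat, by omega, hcast, ?_, ?_⟩
  · rw [← Real.rpow_natCast, ← Real.le_logb_iff_rpow_le one_lt_two hx0, hcast]
    exact Int.floor_le _
  · rw [← Real.rpow_natCast, ← Real.logb_lt_iff_lt_rpow one_lt_two hx0]
    push_cast
    rw [hcast]
    linarith [Int.lt_floor_add_one (Real.logb 2 x)]

include hm hd in
lemma sp_tail_le (s : ℝ) (hs : 0 < s) : (μ {ω | s < Y ω}).toReal ≤ 2 / s := by
  rcases lt_or_ge s 2 with h2 | h2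
  · have hle : (μ {ω | s < Y ω}).toReal ≤ 1 := by
      rw [← ENNReal.toReal_one]
      exact ENNReal.toReal_mono (by norm_num) prob_le_one
    have : (1:ℝ) ≤ 2 / s := (one_le_div hs).mpr (by linarith)
    linarith
  · obtain ⟨m, hm1, _, hle, hlt⟩ := log_floor s h2
    rw [sp_tail μ Y hm hd m s hle hlt]
    have h2m : (0:ℝ) < 2 ^ m := by positivity
    rw [show (((2 : ℝ≥0∞) ^ m)⁻¹).toReal = ((2:ℝ) ^ m)⁻¹ by simp]
    rw [inv_eq_one_div, div_le_div_iff₀ h2m hs]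
    rw [pow_succ] at hlt
    linarith

section Two

variable {Ω : Type*} [MeasurableSpace Ω] (μ : Measure Ω) [IsProbabilityMeasure μ]
variable (X₁ X₂ : Ω → ℝ) (hm₁ : Measurable X₁) (hm₂ : Measurable X₂)
variable (hindep : IndepFun X₁ X₂ μ)
variable (hd₁ : ∀ k : ℕ, 1 ≤ k → μ {ω | X₁ ω = 2 ^ k} = ((2 : ℝ≥0∞) ^ k)⁻¹)
variable (hd₂ : ∀ k : ℕ, 1 ≤ k → μ {ω | X₂ ω = 2 ^ k} = ((2 : ℝ≥0∞) ^ k)⁻¹)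

include hm₁ hm₂ hindep hd₁ hd₂ in
lemma sp_part1 (k l : ℕ) (hk : 1 ≤ k) (hkl : k < l) :
    (μ {ω | (2 : ℝ) ^ l + 2 ^ k < X₁ ω + X₂ ω}).toReal /
        (μ {ω | (2 : ℝ) ^ l + 2 ^ k < X₁ ω}).toReal =
      2 + 2 * ((2 : ℝ) ^ k)⁻¹ - 4 * ((2 : ℝ) ^ l)⁻¹ := by
  have hl1 : 1 ≤ l := by omega
  have hklR : (2:ℝ) ^ k < 2 ^ l := pow_lt_pow_right₀ one_lt_two hkl
  have hp2k : (0:ℝ) < 2 ^ k := by positivity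
  have hp2l : (0:ℝ) < 2 ^ l := by positivity
  have hthi : (2:ℝ) ^ l + 2 ^ k < 2 ^ (l + 1) := by rw [pow_succ]; linarith
  have hden : μ {ω | (2:ℝ) ^ l + 2 ^ k < X₁ ω} = ((2:ℝ≥0∞) ^ l)⁻¹ :=
    sp_tail μ X₁ hm₁ hd₁ l _ (by linarith) hthi
  set S : Set Ω :=
    {ω | ∃ j : ℕ, 1 ≤ j ∧ X₁ ω = 2 ^ j} ∩ {ω | ∃ j : ℕ, 1 ≤ j ∧ X₂ ω = 2 ^ j} with hSdef
  have hSnull : μ Sᶜ = 0 := by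
    rw [hSdef, Set.compl_inter]
    refine measure_union_null ?_ ?_
    · exact sp_null μ X₁ hm₁ hd₁
    · exact sp_null μ X₂ hm₂ hd₂
  set A1 : Set Ω := X₁ ⁻¹' (Set.Ioi ((2:ℝ) ^ l)) with hA1def
  set A2 : Set Ω := X₁ ⁻¹' {((2:ℝ) ^ l)} ∩ X₂ ⁻¹' (Set.Ioi ((2:ℝ) ^ k)) with hA2def
  set B1 : Set Ω := X₁ ⁻¹' (Set.Iio ((2:ℝ) ^ l)) ∩ X₂ ⁻¹' (Set.Ioi ((2:ℝ) ^ l)) with hB1def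
  set B2 : Set Ω := X₁ ⁻¹' (Set.Ioo ((2:ℝ) ^ k) ((2:ℝ) ^ l)) ∩ X₂ ⁻¹' {((2:ℝ) ^ l)} with hB2def
  have hsetEq : {ω | (2:ℝ) ^ l + 2 ^ k < X₁ ω + X₂ ω} ∩ S = (A1 ∪ A2 ∪ B1 ∪ B2) ∩ S := by
    ext ω
    simp only [hSdef, hA1def, hA2def, hB1def, hB2def, Set.mem_inter_iff, Set.mem_setOf_eq,
      Set.mem_union, Set.mem_preimage, Set.mem_singleton_iff, Set.mem_Ioi, Set.mem_Iio,
      Set.mem_Ioo]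
    constructor
    · rintro ⟨hsum, ⟨i, hi, h1⟩, ⟨j, hj, h2⟩⟩
      refine ⟨?_, ⟨i, hi, h1⟩, ⟨j, hj, h2⟩⟩
      rw [h1, h2] at hsum ⊢
      rcases lt_trichotomy i l with hil | hil | hil
      · rcases lt_trichotomy j l with hjl | hjl | hjl
        · exfalso
          have hi' : (2:ℝ) ^ (i+1) ≤ 2 ^ l := pow_le_pow_right₀ one_le_two (by omega)
          have hj' : (2:ℝ) ^ (j+1) ≤ 2 ^ l := pow_le_pow_right₀ one_le_two (by omega)
          rw [pow_succ] at hi' hj'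
          linarith
        · subst hjl
          exact Or.inr ⟨⟨by linarith, pow_lt_pow_right₀ one_lt_two hil⟩, rfl⟩
        · exact Or.inl (Or.inr ⟨pow_lt_pow_right₀ one_lt_two hil,
            pow_lt_pow_right₀ one_lt_two hjl⟩)
      · subst hil
        exact Or.inl (Or.inl (Or.inr ⟨rfl, by linarith⟩))
      · exact Or.inl (Or.inl (Or.inl (pow_lt_pow_right₀ one_lt_two hil)))
    · rintro ⟨hU, hS1, hS2⟩
      refine ⟨?_, hS1, hS2⟩
      obtain ⟨i, hi, h1⟩ := hS1
      obtain ⟨j, hj, h2⟩ := hS2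
      have h2i : (2:ℝ) ≤ 2 ^ i := by
        calc (2:ℝ) = 2 ^ 1 := (pow_one 2).symm
        _ ≤ 2 ^ i := pow_le_pow_right₀ one_le_two hi
      have h2j : (2:ℝ) ≤ 2 ^ j := by
        calc (2:ℝ) = 2 ^ 1 := (pow_one 2).symm
        _ ≤ 2 ^ j := pow_le_pow_right₀ one_le_two hj
      rcases hU with ((hA1 | ⟨hX1, hX2⟩) | ⟨hX1, hX2⟩) | ⟨hX1, hX2⟩
      · rw [h1] at hA1
        have hli : l < i := (pow_lt_pow_iff_right₀ one_lt_two).mp hA1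
        have h' : (2:ℝ) ^ (l+1) ≤ 2 ^ i := pow_le_pow_right₀ one_le_two (by omega)
        rw [pow_succ] at h'
        rw [h1, h2]
        linarith
      · rw [hX1]
        linarith
      · rw [h2] at hX2
        have hlj : l < j := (pow_lt_pow_iff_right₀ one_lt_two).mp hX2
        have h' : (2:ℝ) ^ (l+1) ≤ 2 ^ j := pow_le_pow_right₀ one_le_two (by omega)
        rw [pow_succ] at h'
        rw [h1, h2]
        linarith
      · rw [hX2]
        linarith [hX1.1]
  have hpre1 : X₁ ⁻¹' {((2:ℝ) ^ l)} = {ω | X₁ ω = 2 ^ l} := by ext ω; simp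
  have hpre2 : X₂ ⁻¹' {((2:ℝ) ^ l)} = {ω | X₂ ω = 2 ^ l} := by ext ω; simp
  have hμA1 : μ A1 = ((2:ℝ≥0∞) ^ l)⁻¹ := by
    rw [hA1def]
    exact sp_tail μ X₁ hm₁ hd₁ l _ le_rfl (pow_lt_pow_right₀ one_lt_two l.lt_succ_self)
  have hμA2 : μ A2 = ((2:ℝ≥0∞) ^ l)⁻¹ * ((2:ℝ≥0∞) ^ k)⁻¹ := by
    rw [hA2def, hindep.measure_inter_preimage_eq_mul _ _ (measurableSet_singleton _)
      measurableSet_Ioi, hpre1, hd₁ l hl1]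
    congr 1
    exact sp_tail μ X₂ hm₂ hd₂ k _ le_rfl (pow_lt_pow_right₀ one_lt_two k.lt_succ_self)
  have hμIio : μ (X₁ ⁻¹' (Set.Iio ((2:ℝ) ^ l))) = 1 - 2 * ((2:ℝ≥0∞) ^ l)⁻¹ := by
    have hc : X₁ ⁻¹' (Set.Iio ((2:ℝ) ^ l)) = (X₁ ⁻¹' (Set.Ici ((2:ℝ) ^ l)))ᶜ := by
      ext ω; simp [not_le]
    have hc2 : X₁ ⁻¹' (Set.Ici ((2:ℝ) ^ l)) = {ω | (2:ℝ) ^ l ≤ X₁ ω} := rfl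
    rw [hc, measure_compl (hm₁ measurableSet_Ici) (measure_ne_top μ _), hc2,
      sp_ge μ X₁ hm₁ hd₁ l hl1, measure_univ]
  have hμB1 : μ B1 = (1 - 2 * ((2:ℝ≥0∞) ^ l)⁻¹) * ((2:ℝ≥0∞) ^ l)⁻¹ := by
    rw [hB1def, hindep.measure_inter_preimage_eq_mul _ _ measurableSet_Iio measurableSet_Ioi,
      hμIio]
    congr 1
    exact sp_tail μ X₂ hm₂ hd₂ l _ le_rfl (pow_lt_pow_right₀ one_lt_two l.lt_succ_self)
  set m : ℝ≥0∞ := μ {ω | (2:ℝ) ^ k < X₁ ω ∧ X₁ ω < 2 ^ l} with hmdef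
  have hmeq : m + 2 * ((2:ℝ≥0∞) ^ l)⁻¹ = ((2:ℝ≥0∞) ^ k)⁻¹ := sp_ioo_add μ X₁ hm₁ hd₁ k l hk hkl
  have hμB2 : μ B2 = m * ((2:ℝ≥0∞) ^ l)⁻¹ := by
    rw [hB2def, hindep.measure_inter_preimage_eq_mul _ _ measurableSet_Ioo
      (measurableSet_singleton _), hpre2, hd₂ l hl1, hmdef]
    rfl
  have hd12 : Disjoint A1 A2 := Set.disjoint_left.2 fun ω h1 h2 => by
    simp only [hA1def, hA2def, Set.mem_preimage, Set.mem_Ioi, Set.mem_inter_iff,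
      Set.mem_singleton_iff] at h1 h2
    linarith [h2.1, h1]
  have hd13 : Disjoint A1 B1 := Set.disjoint_left.2 fun ω h1 h2 => by
    simp only [hA1def, hB1def, Set.mem_preimage, Set.mem_Ioi, Set.mem_inter_iff,
      Set.mem_Iio] at h1 h2
    linarith [h2.1, h1]
  have hd14 : Disjoint A1 B2 := Set.disjoint_left.2 fun ω h1 h2 => by
    simp only [hA1def, hB2def, Set.mem_preimage, Set.mem_Ioi, Set.mem_inter_iff,
      Set.mem_Ioo] at h1 h2
    linarith [h2.1.2, h1]
  have hd23 : Disjoint A2 B1 := Set.disjoint_left.2 fun ω h1 h2 => by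
    simp only [hA2def, hB1def, Set.mem_preimage, Set.mem_Ioi, Set.mem_inter_iff,
      Set.mem_Iio, Set.mem_singleton_iff] at h1 h2
    linarith [h1.1, h2.1]
  have hd24 : Disjoint A2 B2 := Set.disjoint_left.2 fun ω h1 h2 => by
    simp only [hA2def, hB2def, Set.mem_preimage, Set.mem_Ioi, Set.mem_inter_iff,
      Set.mem_Ioo, Set.mem_singleton_iff] at h1 h2
    linarith [h1.1, h2.1.2]
  have hd34 : Disjoint B1 B2 := Set.disjoint_left.2 fun ω h1 h2 => by
    simp only [hB1def, hB2def, Set.mem_preimage, Set.mem_Ioi, Set.mem_inter_iff,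
      Set.mem_Iio, Set.mem_Ioo, Set.mem_singleton_iff] at h1 h2
    linarith [h1.2, h2.2.le]
  have hmA1 : MeasurableSet A1 := hm₁ measurableSet_Ioi
  have hmA2 : MeasurableSet A2 := (hm₁ (measurableSet_singleton _)).inter (hm₂ measurableSet_Ioi)
  have hmB1 : MeasurableSet B1 := (hm₁ measurableSet_Iio).inter (hm₂ measurableSet_Ioi)
  have hmB2 : MeasurableSet B2 := (hm₁ measurableSet_Ioo).inter (hm₂ (measurableSet_singleton _))
  have hnum : μ {ω | (2:ℝ) ^ l + 2 ^ k < X₁ ω + X₂ ω} = μ A1 + μ A2 + μ B1 + μ B2 := by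
    have e1 : μ {ω | (2:ℝ) ^ l + 2 ^ k < X₁ ω + X₂ ω} = μ (A1 ∪ A2 ∪ B1 ∪ B2) := by
      rw [← measure_inter_conull (μ := μ) hSnull, hsetEq, measure_inter_conull (μ := μ) hSnull]
    rw [e1, Set.union_assoc, Set.union_assoc,
      measure_union (hd12.union_right (hd13.union_right hd14)) (hmA2.union (hmB1.union hmB2)),
      measure_union (hd23.union_right hd24) (hmB1.union hmB2),
      measure_union hd34 hmB2]
    ring
  -- convert to real
  set a : ℝ := ((2:ℝ) ^ k)⁻¹ with hadef
  set b : ℝ := ((2:ℝ) ^ l)⁻¹ with hbdef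
  have htlb : (((2:ℝ≥0∞) ^ l)⁻¹).toReal = b := by simp [hbdef]
  have htka : (((2:ℝ≥0∞) ^ k)⁻¹).toReal = a := by simp [hadef]
  have hble : 2 * ((2:ℝ≥0∞) ^ l)⁻¹ ≤ 1 := by
    have h2l : (2:ℝ≥0∞) ≤ 2 ^ l := by
      calc (2:ℝ≥0∞) = 2 ^ 1 := (pow_one 2).symm
      _ ≤ 2 ^ l := pow_le_pow_right₀ one_le_two hl1
    calc 2 * ((2:ℝ≥0∞) ^ l)⁻¹ ≤ 2 ^ l * ((2:ℝ≥0∞) ^ l)⁻¹ := mul_le_mul_left h2l _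
    _ = 1 := ENNReal.mul_inv_cancel (by positivity) (by simp)
  have ht1 : ((1 : ℝ≥0∞) - 2 * ((2:ℝ≥0∞) ^ l)⁻¹).toReal = 1 - 2 * b := by
    rw [ENNReal.toReal_sub_of_le hble (by norm_num), ENNReal.toReal_mul, htlb]
    norm_num
  have htm : m.toReal = a - 2 * b := by
    have := congrArg ENNReal.toReal hmeq
    rw [ENNReal.toReal_add (measure_ne_top μ _)
        (ENNReal.mul_ne_top (by norm_num) (by simp)), ENNReal.toReal_mul, htlb, htka]
      at this
    simp only [ENNReal.toReal_ofNat] at this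
    linarith
  have hb0 : 0 < b := by rw [hbdef]; positivity
  have hnumR : (μ {ω | (2:ℝ) ^ l + 2 ^ k < X₁ ω + X₂ ω}).toReal
      = b + b * a + (1 - 2 * b) * b + (a - 2 * b) * b := by
    have hfin : ∀ s : Set Ω, μ s ≠ ⊤ := fun s => measure_ne_top μ s
    rw [hnum, ENNReal.toReal_add (ENNReal.add_ne_top.mpr
        ⟨ENNReal.add_ne_top.mpr ⟨hfin _, hfin _⟩, hfin _⟩) (hfin _),
      ENNReal.toReal_add (ENNReal.add_ne_top.mpr ⟨hfin _, hfin _⟩) (hfin _),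
      ENNReal.toReal_add (hfin _) (hfin _), hμA1, hμA2, hμB1, hμB2,
      ENNReal.toReal_mul, ENNReal.toReal_mul, ENNReal.toReal_mul, htlb, htka, ht1, htm]
  rw [hnumR, hden, htlb]
  field_simp
  ring
include hm₁ hm₂ hindep hd₁ hd₂ in
lemma sp_bound (δ : ℝ) (hδ : 0 < δ) (x : ℝ) (hx : 2 ≤ x)
    (hfr : δ ≤ Int.fract (Real.logb 2 x)) :
    |(μ {ω | x < X₁ ω + X₂ ω}).toReal / (μ {ω | x < X₁ ω}).toReal - 2|
      ≤ (1 + 4 / ((2:ℝ) ^ δ - 1)) * (2 / x) := by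
  have hx0 : (0:ℝ) < x := by linarith
  obtain ⟨n, hn1, hcast, hle, hlt⟩ := log_floor x hx
  set c : ℝ := (2:ℝ) ^ δ - 1 with hcdef
  have hc0 : 0 < c := by
    have : (1:ℝ) < (2:ℝ) ^ δ :=
      Real.one_lt_rpow_iff_of_pos two_pos |>.mpr (Or.inl ⟨one_lt_two, hδ⟩)
    simp [hcdef]; linarith
  have h2n : (0:ℝ) < 2 ^ n := by positivity
  have hfrac : Int.fract (Real.logb 2 x) = Real.logb 2 x - n := by
    rw [Int.fract, ← hcast]
  have hlogb : (n:ℝ) + δ ≤ Real.logb 2 x := by rw [hfrac] at hfr; linarith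
  have hxc : (2:ℝ) ^ n * (1 + c) ≤ x := by
    have h1 : (2:ℝ) ^ ((n:ℝ) + δ) ≤ x :=
      (Real.le_logb_iff_rpow_le one_lt_two hx0).mp hlogb
    rw [Real.rpow_add two_pos, Real.rpow_natCast] at h1
    have : (1:ℝ) + c = (2:ℝ) ^ δ := by rw [hcdef]; ring
    rw [this]
    exact h1
  have hgap : c * 2 ^ n ≤ x - 2 ^ n := by nlinarith
  have hden : μ {ω | x < X₁ ω} = ((2:ℝ≥0∞) ^ n)⁻¹ := sp_tail μ X₁ hm₁ hd₁ n x hle hlt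
  set S : Set Ω :=
    {ω | ∃ j : ℕ, 1 ≤ j ∧ X₁ ω = 2 ^ j} ∩ {ω | ∃ j : ℕ, 1 ≤ j ∧ X₂ ω = 2 ^ j} with hSdef
  have hSnull : μ Sᶜ = 0 := by
    rw [hSdef, Set.compl_inter]
    refine measure_union_null ?_ ?_
    · exact sp_null μ X₁ hm₁ hd₁
    · exact sp_null μ X₂ hm₂ hd₂
  set A1 : Set Ω := X₁ ⁻¹' (Set.Ioi ((2:ℝ) ^ n)) with hA1def
  set B1 : Set Ω := X₁ ⁻¹' (Set.Iic ((2:ℝ) ^ n)) ∩ X₂ ⁻¹' (Set.Ioi ((2:ℝ) ^ n)) with hB1def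
  set D1 : Set Ω := X₁ ⁻¹' {((2:ℝ) ^ n)} ∩ X₂ ⁻¹' (Set.Ioi (c * 2 ^ n)) with hD1def
  set D2 : Set Ω := X₁ ⁻¹' (Set.Ioi (c * 2 ^ n)) ∩ X₂ ⁻¹' {((2:ℝ) ^ n)} with hD2def
  have hmA1 : MeasurableSet A1 := hm₁ measurableSet_Ioi
  have hmB1 : MeasurableSet B1 := (hm₁ measurableSet_Iic).inter (hm₂ measurableSet_Ioi)
  have pow_ge_two : ∀ i : ℕ, 1 ≤ i → (2:ℝ) ≤ 2 ^ i := fun i hi => by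
    calc (2:ℝ) = 2 ^ 1 := (pow_one 2).symm
    _ ≤ 2 ^ i := pow_le_pow_right₀ one_le_two hi
  have hlow : μ A1 + μ B1 ≤ μ {ω | x < X₁ ω + X₂ ω} := by
    have hdisj : Disjoint A1 B1 := Set.disjoint_left.2 fun ω h1 h2 => by
      simp only [hA1def, hB1def, Set.mem_preimage, Set.mem_Ioi, Set.mem_inter_iff,
        Set.mem_Iic] at h1 h2
      linarith [h2.1]
    have hsub : (A1 ∪ B1) ∩ S ⊆ {ω | x < X₁ ω + X₂ ω} := by
      rintro ω ⟨hU, ⟨i, hi, h1⟩, ⟨j, hj, h2⟩⟩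
      have h2i := pow_ge_two i hi
      have h2j := pow_ge_two j hj
      simp only [hA1def, hB1def, Set.mem_union, Set.mem_preimage, Set.mem_Ioi,
        Set.mem_inter_iff, Set.mem_Iic] at hU
      simp only [Set.mem_setOf_eq]
      have hlt' : x < 2 ^ n * 2 := by rw [← pow_succ]; exact hlt
      rcases hU with h | ⟨_, h⟩
      · rw [h1] at h
        have hni : n < i := (pow_lt_pow_iff_right₀ one_lt_two).mp h
        have h' : (2:ℝ) ^ (n+1) ≤ 2 ^ i := pow_le_pow_right₀ one_le_two (by omega)
        rw [pow_succ] at h'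
        rw [h1, h2]
        linarith
      · rw [h2] at h
        have hnj : n < j := (pow_lt_pow_iff_right₀ one_lt_two).mp h
        have h' : (2:ℝ) ^ (n+1) ≤ 2 ^ j := pow_le_pow_right₀ one_le_two (by omega)
        rw [pow_succ] at h'
        rw [h1, h2]
        linarith
    calc μ A1 + μ B1 = μ (A1 ∪ B1) := (measure_union hdisj hmB1).symm
    _ = μ ((A1 ∪ B1) ∩ S) := (measure_inter_conull (μ := μ) hSnull).symm
    _ ≤ μ {ω | x < X₁ ω + X₂ ω} := measure_mono hsub
  have hup : μ {ω | x < X₁ ω + X₂ ω} ≤ μ A1 + μ B1 + μ D1 + μ D2 := by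
    have hsub : {ω | x < X₁ ω + X₂ ω} ∩ S ⊆ A1 ∪ B1 ∪ D1 ∪ D2 := by
      rintro ω ⟨hsum, ⟨i, hi, h1⟩, ⟨j, hj, h2⟩⟩
      simp only [Set.mem_setOf_eq] at hsum
      simp only [hA1def, hB1def, hD1def, hD2def, Set.mem_union, Set.mem_preimage,
        Set.mem_Ioi, Set.mem_inter_iff, Set.mem_Iic, Set.mem_singleton_iff]
      rcases lt_trichotomy i n with hin | hin | hin
      · rcases lt_trichotomy j n with hjn | hjn | hjn
        · exfalso
          have hi' : (2:ℝ) ^ (i+1) ≤ 2 ^ n := pow_le_pow_right₀ one_le_two (by omega)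
          have hj' : (2:ℝ) ^ (j+1) ≤ 2 ^ n := pow_le_pow_right₀ one_le_two (by omega)
          rw [pow_succ] at hi' hj'
          rw [h1, h2] at hsum
          nlinarith
        · subst hjn
          refine Or.inr ⟨?_, h2⟩
          rw [h1, h2] at hsum
          rw [h1]
          linarith
        · refine Or.inl (Or.inl (Or.inr ⟨?_, ?_⟩))
          · rw [h1]
            exact (pow_le_pow_right₀ one_le_two hin.le).trans le_rfl
          · rw [h2]
            exact pow_lt_pow_right₀ one_lt_two hjn
      · subst hin
        refine Or.inl (Or.inr ⟨h1, ?_⟩)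
        rw [h1] at hsum
        linarith
      · exact Or.inl (Or.inl (Or.inl (by rw [h1]; exact pow_lt_pow_right₀ one_lt_two hin)))
    calc μ {ω | x < X₁ ω + X₂ ω} = μ ({ω | x < X₁ ω + X₂ ω} ∩ S) :=
        (measure_inter_conull (μ := μ) hSnull).symm
    _ ≤ μ (A1 ∪ B1 ∪ D1 ∪ D2) := measure_mono hsub
    _ ≤ μ (A1 ∪ B1 ∪ D1) + μ D2 := measure_union_le _ _
    _ ≤ (μ (A1 ∪ B1) + μ D1) + μ D2 := add_le_add_left (measure_union_le _ _) _
    _ ≤ ((μ A1 + μ B1) + μ D1) + μ D2 :=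
        add_le_add_left (add_le_add_left (measure_union_le _ _) _) _
  -- measures of pieces
  have hμA1 : μ A1 = ((2:ℝ≥0∞) ^ n)⁻¹ := by
    rw [hA1def]
    exact sp_tail μ X₁ hm₁ hd₁ n _ le_rfl (pow_lt_pow_right₀ one_lt_two n.lt_succ_self)
  have hμIic : μ (X₁ ⁻¹' (Set.Iic ((2:ℝ) ^ n))) = 1 - ((2:ℝ≥0∞) ^ n)⁻¹ := by
    have hc2 : X₁ ⁻¹' (Set.Iic ((2:ℝ) ^ n)) = (X₁ ⁻¹' (Set.Ioi ((2:ℝ) ^ n)))ᶜ := by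
      ext ω; simp [not_lt]
    rw [hc2, measure_compl (hm₁ measurableSet_Ioi) (measure_ne_top μ _), measure_univ, ← hA1def,
      hμA1]
  have hμB1 : μ B1 = (1 - ((2:ℝ≥0∞) ^ n)⁻¹) * ((2:ℝ≥0∞) ^ n)⁻¹ := by
    rw [hB1def, hindep.measure_inter_preimage_eq_mul _ _ measurableSet_Iic measurableSet_Ioi]
    rw [show X₁ ⁻¹' (Set.Iic ((2:ℝ) ^ n)) = X₁ ⁻¹' (Set.Iic ((2:ℝ) ^ n)) from rfl, hμIic]
    congr 1
    exact sp_tail μ X₂ hm₂ hd₂ n _ le_rfl (pow_lt_pow_right₀ one_lt_two n.lt_succ_self)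
  set τ₁ : ℝ≥0∞ := μ {ω | c * 2 ^ n < X₁ ω} with hτ₁def
  set τ₂ : ℝ≥0∞ := μ {ω | c * 2 ^ n < X₂ ω} with hτ₂def
  have hμD1 : μ D1 = ((2:ℝ≥0∞) ^ n)⁻¹ * τ₂ := by
    rw [hD1def, hindep.measure_inter_preimage_eq_mul _ _ (measurableSet_singleton _)
      measurableSet_Ioi]
    congr 1
    have : X₁ ⁻¹' {((2:ℝ) ^ n)} = {ω | X₁ ω = 2 ^ n} := by ext ω; simp
    rw [this, hd₁ n hn1]
  have hμD2 : μ D2 = τ₁ * ((2:ℝ≥0∞) ^ n)⁻¹ := by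
    rw [hD2def, hindep.measure_inter_preimage_eq_mul _ _ measurableSet_Ioi
      (measurableSet_singleton _)]
    congr 1
    have : X₂ ⁻¹' {((2:ℝ) ^ n)} = {ω | X₂ ω = 2 ^ n} := by ext ω; simp
    rw [this, hd₂ n hn1]
  -- real versions
  set d : ℝ := ((2:ℝ) ^ n)⁻¹ with hddef
  have hd0 : 0 < d := by rw [hddef]; positivity
  have htd : (((2:ℝ≥0∞) ^ n)⁻¹).toReal = d := by simp [hddef]
  have hinvle : ((2:ℝ≥0∞) ^ n)⁻¹ ≤ 1 := by
    rw [ENNReal.inv_le_one]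
    exact one_le_pow_of_one_le' one_le_two n
  have ht1d : ((1 : ℝ≥0∞) - ((2:ℝ≥0∞) ^ n)⁻¹).toReal = 1 - d := by
    rw [ENNReal.toReal_sub_of_le hinvle (by norm_num), htd]
    norm_num
  have hτbound : ∀ (Y : Ω → ℝ), Measurable Y →
      (∀ k : ℕ, 1 ≤ k → μ {ω | Y ω = 2 ^ k} = ((2 : ℝ≥0∞) ^ k)⁻¹) →
      (μ {ω | c * 2 ^ n < Y ω}).toReal ≤ (2 / c) * d := by
    intro Y hmY hdY
    have := sp_tail_le μ Y hmY hdY (c * 2 ^ n) (by positivity)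
    calc (μ {ω | c * 2 ^ n < Y ω}).toReal ≤ 2 / (c * 2 ^ n) := this
    _ = (2 / c) * d := by rw [hddef]; field_simp
  have hτ₁R : τ₁.toReal ≤ (2 / c) * d := hτbound X₁ hm₁ hd₁
  have hτ₂R : τ₂.toReal ≤ (2 / c) * d := hτbound X₂ hm₂ hd₂
  have hfin : ∀ s : Set Ω, μ s ≠ ⊤ := fun s => measure_ne_top μ s
  set N : ℝ := (μ {ω | x < X₁ ω + X₂ ω}).toReal with hNdef
  have hlowR : d + (1 - d) * d ≤ N := by
    have := ENNReal.toReal_mono (hfin _) hlow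
    rw [ENNReal.toReal_add (hfin _) (hfin _), hμA1, hμB1, ENNReal.toReal_mul, htd, ht1d]
      at this
    exact this
  have hupR : N ≤ d + (1 - d) * d + d * ((2 / c) * d) + ((2 / c) * d) * d := by
    have h1 : N ≤ (μ A1 + μ B1 + μ D1 + μ D2).toReal := by
      refine ENNReal.toReal_mono ?_ hup
      exact ENNReal.add_ne_top.mpr ⟨ENNReal.add_ne_top.mpr
        ⟨ENNReal.add_ne_top.mpr ⟨hfin _, hfin _⟩, hfin _⟩, hfin _⟩
    rw [ENNReal.toReal_add (ENNReal.add_ne_top.mpr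
        ⟨ENNReal.add_ne_top.mpr ⟨hfin _, hfin _⟩, hfin _⟩) (hfin _),
      ENNReal.toReal_add (ENNReal.add_ne_top.mpr ⟨hfin _, hfin _⟩) (hfin _),
      ENNReal.toReal_add (hfin _) (hfin _), hμA1, hμB1, hμD1, hμD2,
      ENNReal.toReal_mul, ENNReal.toReal_mul, ENNReal.toReal_mul, htd, ht1d] at h1
    have hm1 : d * τ₂.toReal ≤ d * ((2 / c) * d) :=
      mul_le_mul_of_nonneg_left hτ₂R hd0.le
    have hm2 : τ₁.toReal * d ≤ ((2 / c) * d) * d :=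
      mul_le_mul_of_nonneg_right hτ₁R hd0.le
    linarith
  have hdenR : (μ {ω | x < X₁ ω}).toReal = d := by rw [hden, htd]
  have hratio_lb : 2 - d ≤ N / d := by
    rw [le_div_iff₀ hd0]
    nlinarith
  have hratio_ub : N / d ≤ 2 + (4 / c) * d := by
    rw [div_le_iff₀ hd0]
    have key : (2 + 4 / c * d) * d - (d + (1 - d) * d + d * (2 / c * d) + 2 / c * d * d)
        = d * d := by ring
    linarith [key, mul_nonneg hd0.le hd0.le, hupR]
  have hdx : d ≤ 2 / x := by
    have hx2n : x ≤ 2 * 2 ^ n := by rw [pow_succ] at hlt; linarith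
    rw [hddef, inv_eq_one_div, div_le_div_iff₀ h2n hx0]
    linarith
  have h4c : (0:ℝ) ≤ 4 / c := div_nonneg (by norm_num) hc0.le
  have h4cd : (0:ℝ) ≤ 4 / c * d := mul_nonneg h4c hd0.le
  rw [hdenR]
  have habs : |N / d - 2| ≤ (1 + 4 / c) * d := by
    rw [abs_le]
    have e1 : (1 + 4 / c) * d = d + 4 / c * d := by ring
    constructor
    · rw [e1]; linarith
    · rw [e1]; linarith
  calc |N / d - 2| ≤ (1 + 4 / c) * d := habs
  _ ≤ (1 + 4 / c) * (2 / x) := mul_le_mul_of_nonneg_left hdx (by linarith)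

include hm₁ hm₂ hindep hd₁ hd₂ in
lemma sp_part2 (δ : ℝ) (hδ : 0 < δ) :
    Tendsto (fun x : ℝ =>
        (μ {ω | x < X₁ ω + X₂ ω}).toReal / (μ {ω | x < X₁ ω}).toReal)
      (atTop ⊓ 𝓟 {x : ℝ | δ ≤ Int.fract (Real.logb 2 x)}) (𝓝 2) := by
  have hc0 : 0 < (2:ℝ) ^ δ - 1 := by
    have : (1:ℝ) < (2:ℝ) ^ δ :=
      Real.one_lt_rpow_iff_of_pos two_pos |>.mpr (Or.inl ⟨one_lt_two, hδ⟩)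
    linarith
  set C : ℝ := 1 + 4 / ((2:ℝ) ^ δ - 1) with hCdef
  have hC0 : 0 < C := by
    have : (0:ℝ) ≤ 4 / ((2:ℝ) ^ δ - 1) := div_nonneg (by norm_num) hc0.le
    rw [hCdef]; linarith
  rw [Metric.tendsto_nhds]
  intro ε hε
  rw [eventually_inf_principal]
  filter_upwards [eventually_ge_atTop (max 2 (C * 2 / ε + 1))] with x hx hmem
  have hx2 : (2:ℝ) ≤ x := le_trans (le_max_left _ _) hx
  have hx0 : (0:ℝ) < x := by linarith
  have hb := sp_bound μ X₁ X₂ hm₁ hm₂ hindep hd₁ hd₂ δ hδ x hx2 hmem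
  rw [Real.dist_eq]
  have hxC : C * 2 / ε < x :=
    lt_of_lt_of_le (lt_add_one _) (le_trans (le_max_right _ _) hx)
  have h1 : C * 2 < ε * x := by
    have := (div_lt_iff₀ hε).mp hxC
    linarith
  have h2 : C * (2 / x) < ε := by
    rw [mul_div_assoc'] at *
    rw [div_lt_iff₀ hx0]
    linarith
  exact lt_of_le_of_lt hb h2

end Two

end Aux

end

/-- For independent St. Petersburg `X₁, X₂` and integers `1 ≤ k < ℓ`,
`P{X₁+X₂ > 2^ℓ + 2^k} / P{X₁ > 2^ℓ + 2^k} = 2 + 2·2^{-k} - 4·2^{-ℓ}`; in particular,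
for every `δ > 0`, `P{X₁+X₂ > x}/P{X₁ > x} → 2` as `x → ∞` along `{log₂ x} ≥ δ`. -/
theorem stmt_5 {Ω : Type*} [MeasurableSpace Ω] (μ : Measure Ω) [IsProbabilityMeasure μ]
    (X₁ X₂ : Ω → ℝ) (hm₁ : Measurable X₁) (hm₂ : Measurable X₂)
    (hindep : IndepFun X₁ X₂ μ)
    (hd₁ : ∀ k : ℕ, 1 ≤ k → μ {ω | X₁ ω = 2 ^ k} = ((2 : ℝ≥0∞) ^ k)⁻¹)
    (hd₂ : ∀ k : ℕ, 1 ≤ k → μ {ω | X₂ ω = 2 ^ k} = ((2 : ℝ≥0∞) ^ k)⁻¹) :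
    (∀ k l : ℕ, 1 ≤ k → k < l →
      (μ {ω | (2 : ℝ) ^ l + 2 ^ k < X₁ ω + X₂ ω}).toReal /
          (μ {ω | (2 : ℝ) ^ l + 2 ^ k < X₁ ω}).toReal =
        2 + 2 * ((2 : ℝ) ^ k)⁻¹ - 4 * ((2 : ℝ) ^ l)⁻¹) ∧
    (∀ δ : ℝ, 0 < δ →
      Tendsto (fun x : ℝ =>
          (μ {ω | x < X₁ ω + X₂ ω}).toReal / (μ {ω | x < X₁ ω}).toReal)
        (atTop ⊓ 𝓟 {x : ℝ | δ ≤ Int.fract (Real.logb 2 x)}) (𝓝 2)) := by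
  constructor
  · intro k l hk hkl
    exact sp_part1 μ X₁ X₂ hm₁ hm₂ hindep hd₁ hd₂ k l hk hkl
  · intro δ hδ
    exact sp_part2 μ X₁ X₂ hm₁ hm₂ hindep hd₁ hd₂ δ hδ
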